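/- Let A, B ∈ GL(d,ℝ) satisfy σ_p(A) > σ_{p+1}(A) and σ_p(AB) > σ_{p+1}(AB). Then the distance in the Grassmannian satisfies d(B·U_p(A'), U_p(BA')) ≤ (σ₁(B)/σ_d(B))·(σ_{p+1}(A')/σ_p(A')) where A' = A, i.e., d(B·U_p(A), U_p(BA)) ≤ (σ₁/σ_d)(B)·(σ_{p+1}/σ_p)(A). -/

import Mathlib

open Filter Topology


/-- The `i`-th largest singular value (1-based) of a real `d × d` matrix: the `i`-th largest
square root of an eigenvalue of `Aᴴ * A`. -/
noncomputable def sval {d : ℕ} (M : Matrix (Fin d) (Fin d) ℝ) (i : ℕ) : ℝ :=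
  ((List.ofFn fun j =>
      Real.sqrt ((show (M.transpose * M).IsHermitian by
        simpa [Matrix.conjTranspose_eq_transpose_of_trivial] using
          Matrix.isHermitian_conjTranspose_mul_self M).eigenvalues j)).insertionSort
    (· ≥ ·)).getD (i - 1) 0

/-- The modulus of the `i`-th largest (by modulus, 1-based, with multiplicity) complex
eigenvalue of a real `d × d` matrix. -/
noncomputable def eigMod {d : ℕ} (M : Matrix (Fin d) (Fin d) ℝ) (i : ℕ) : ℝ :=
  (((M.map (fun x => (x : ℂ))).charpoly.roots.map (fun z => ‖z‖)).sort
    (· ≤ ·)).getD (d - i) 0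

/-- The span of the columns of `M` indexed by `s`, as a subspace of Euclidean space. -/
noncomputable def colSpan {d : ℕ} (M : Matrix (Fin d) (Fin d) ℝ) (s : Set (Fin d)) :
    Submodule ℝ (EuclideanSpace ℝ (Fin d)) :=
  Submodule.span ℝ ((fun j => (WithLp.equiv 2 (Fin d → ℝ)).symm (M.transpose j)) '' s)

/-- The sine of the minimal angle between two subspaces: the infimum over unit vectors `v ∈ V`
of the distance from `v` to `W`. -/
noncomputable def sinAngle {d : ℕ} (V W : Submodule ℝ (EuclideanSpace ℝ (Fin d))) : ℝ :=
  sInf ((fun v => Metric.infDist v (W : Set (EuclideanSpace ℝ (Fin d)))) ''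
    {v : EuclideanSpace ℝ (Fin d) | v ∈ V ∧ ‖v‖ = 1})

/-- Distance between subspaces of Euclidean space: the supremum over unit vectors `u ∈ P` of the
distance from `u` to `Q`. -/
noncomputable def grDist {d : ℕ} (P Q : Submodule ℝ (EuclideanSpace ℝ (Fin d))) : ℝ :=
  sSup ((fun u => Metric.infDist u (Q : Set (EuclideanSpace ℝ (Fin d)))) ''
    {u : EuclideanSpace ℝ (Fin d) | u ∈ P ∧ ‖u‖ = 1})

namespace Stmt6
open Matrix
variable {d : ℕ}

theorem Matrix.isHermitian_transpose_mul_self (M : Matrix (Fin d) (Fin d) ℝ) :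
    (Mᵀ * M).IsHermitian := by
  simpa [Matrix.conjTranspose_eq_transpose_of_trivial] using
    Matrix.isHermitian_conjTranspose_mul_self M

theorem WithLp.equiv_add (a b : EuclideanSpace ℝ (Fin d)) :
    WithLp.equiv 2 (Fin d → ℝ) (a + b) = WithLp.equiv 2 _ a + WithLp.equiv 2 _ b := rfl

theorem WithLp.equiv_sub (a b : EuclideanSpace ℝ (Fin d)) :
    WithLp.equiv 2 (Fin d → ℝ) (a - b) = WithLp.equiv 2 _ a - WithLp.equiv 2 _ b := rfl

theorem WithLp.equiv_zero : WithLp.equiv 2 (Fin d → ℝ) 0 = 0 := rfl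

theorem WithLp.equiv_smul (c : ℝ) (a : EuclideanSpace ℝ (Fin d)) :
    WithLp.equiv 2 (Fin d → ℝ) (c • a) = c • WithLp.equiv 2 _ a := rfl

theorem WithLp.equiv_pi_apply (a : EuclideanSpace ℝ (Fin d)) (i : Fin d) :
    WithLp.equiv 2 (Fin d → ℝ) a i = a i := rfl

theorem Matrix.piLp_equiv_toEuclideanLin_apply (M : Matrix (Fin d) (Fin d) ℝ)
    (v : EuclideanSpace ℝ (Fin d)) :
    WithLp.equiv 2 (Fin d → ℝ) (Matrix.toEuclideanLin M v) = M *ᵥ WithLp.equiv 2 _ v := rfl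

noncomputable def svlist (M : Matrix (Fin d) (Fin d) ℝ) : List ℝ :=
  ((List.ofFn fun j =>
      Real.sqrt ((Matrix.isHermitian_transpose_mul_self M).eigenvalues j)).insertionSort
    (· ≥ ·))

lemma sval_eq (M : Matrix (Fin d) (Fin d) ℝ) (i : ℕ) : sval M i = (svlist M).getD (i-1) 0 := rfl

lemma svlist_length (M : Matrix (Fin d) (Fin d) ℝ) : (svlist M).length = d := by
  simp [svlist]

lemma svlist_sorted (M : Matrix (Fin d) (Fin d) ℝ) : (svlist M).Pairwise (· ≥ ·) :=
  List.pairwise_insertionSort _ _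

lemma svlist_perm (M : Matrix (Fin d) (Fin d) ℝ) :
    (svlist M).Perm (List.ofFn fun j =>
      Real.sqrt ((Matrix.isHermitian_transpose_mul_self M).eigenvalues j)) :=
  List.perm_insertionSort _ _

lemma svlist_mem_nonneg {M : Matrix (Fin d) (Fin d) ℝ} {x : ℝ} (hx : x ∈ svlist M) : 0 ≤ x := by
  have := (svlist_perm M).mem_iff.mp hx
  rw [List.mem_ofFn] at this
  obtain ⟨j, rfl⟩ := this
  exact Real.sqrt_nonneg _

lemma sval_nonneg (M : Matrix (Fin d) (Fin d) ℝ) (i : ℕ) : 0 ≤ sval M i := by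
  rw [sval_eq]
  rcases lt_or_ge (i-1) (svlist M).length with h | h
  · rw [List.getD_eq_getElem _ _ h]
    exact svlist_mem_nonneg (List.getElem_mem h)
  · rw [List.getD_eq_default _ _ h]

lemma sval_le_sval {M : Matrix (Fin d) (Fin d) ℝ} {i j : ℕ} (h1 : 1 ≤ i) (hij : i ≤ j) :
    sval M j ≤ sval M i := by
  rcases eq_or_lt_of_le hij with rfl | hij
  · exact le_refl _
  · rw [sval_eq, sval_eq]
    rcases lt_or_ge (j-1) (svlist M).length with hj | hj
    · have hi : i - 1 < (svlist M).length := lt_of_le_of_lt (by omega) hj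
      rw [List.getD_eq_getElem _ _ hj, List.getD_eq_getElem _ _ hi]
      exact List.pairwise_iff_getElem.mp (svlist_sorted M) _ _ hi hj (by omega)
    · rw [List.getD_eq_default _ _ hj]
      rcases lt_or_ge (i-1) (svlist M).length with hi | hi
      · rw [List.getD_eq_getElem _ _ hi]
        exact svlist_mem_nonneg (List.getElem_mem hi)
      · rw [List.getD_eq_default _ _ hi]

lemma le_sval_one {M : Matrix (Fin d) (Fin d) ℝ} {x : ℝ} (hx : x ∈ svlist M) : x ≤ sval M 1 := by
  rw [sval_eq]
  obtain ⟨k, hk, rfl⟩ := List.getElem_of_mem hx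
  rcases Nat.eq_zero_or_pos k with rfl | hk0
  · rw [List.getD_eq_getElem _ _ (by omega)]
  · rw [List.getD_eq_getElem _ _ (by omega : 1-1 < (svlist M).length)]
    exact List.pairwise_iff_getElem.mp (svlist_sorted M) _ _ (by omega) hk (by omega)

lemma sval_d_le {M : Matrix (Fin d) (Fin d) ℝ} (hd : 0 < d) {x : ℝ} (hx : x ∈ svlist M) :
    sval M d ≤ x := by
  rw [sval_eq]
  obtain ⟨k, hk, rfl⟩ := List.getElem_of_mem hx
  have hlen : (svlist M).length = d := svlist_length M
  rcases eq_or_lt_of_le (by omega : k ≤ d - 1) with heq | hlt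
  · subst heq
    rw [List.getD_eq_getElem _ _ (by omega)]
  · rw [List.getD_eq_getElem _ _ (by omega : d-1 < (svlist M).length)]
    exact List.pairwise_iff_getElem.mp (svlist_sorted M) _ _ hk (by omega) hlt


lemma sval_mem {M : Matrix (Fin d) (Fin d) ℝ} {i : ℕ} (h1 : 1 ≤ i) (hi : i ≤ d) :
    sval M i ∈ svlist M := by
  rw [sval_eq, List.getD_eq_getElem _ _ (by rw [svlist_length]; omega)]
  exact List.getElem_mem _

lemma quad_eq (M : Matrix (Fin d) (Fin d) ℝ) (v : Fin d → ℝ) :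
    v ⬝ᵥ ((Mᵀ * M) *ᵥ v) = (M *ᵥ v) ⬝ᵥ (M *ᵥ v) := by
  rw [← Matrix.mulVec_mulVec, Matrix.dotProduct_mulVec, Matrix.vecMul_transpose]

lemma dot_orth {K : Matrix (Fin d) (Fin d) ℝ} (hK : Kᵀ * K = 1) (v w : Fin d → ℝ) :
    (K *ᵥ v) ⬝ᵥ (K *ᵥ w) = v ⬝ᵥ w := by
  rw [Matrix.dotProduct_mulVec, ← Matrix.mulVec_transpose, Matrix.mulVec_mulVec, hK,
    Matrix.one_mulVec]

lemma quad_spectral (B : Matrix (Fin d) (Fin d) ℝ) (v : Fin d → ℝ) :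
    ∃ w : Fin d → ℝ, w ⬝ᵥ w = v ⬝ᵥ v ∧
      (B *ᵥ v) ⬝ᵥ (B *ᵥ v) =
        ∑ j, (Matrix.isHermitian_transpose_mul_self B).eigenvalues j * (w j)^2 := by
  have hH := Matrix.isHermitian_transpose_mul_self B
  set U : Matrix (Fin d) (Fin d) ℝ := ↑hH.eigenvectorUnitary with hU
  have hUmem := hH.eigenvectorUnitary.2
  rw [Unitary.mem_iff] at hUmem
  have hU1 : star U * U = 1 := hUmem.1
  have hU2 : U * star U = 1 := hUmem.2
  have hstar : star U = Uᵀ := Matrix.conjTranspose_eq_transpose_of_trivial U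
  refine ⟨Uᵀ *ᵥ v, ?_, ?_⟩
  · exact dot_orth (by rw [Matrix.transpose_transpose, ← hstar, hU2]) v v
  · have h1 : (B *ᵥ v) ⬝ᵥ (B *ᵥ v) = v ⬝ᵥ ((Bᵀ * B) *ᵥ v) := by
      rw [quad_eq]
    rw [h1]
    conv_lhs => rw [hH.spectral_theorem, Unitary.conjStarAlgAut_apply]
    rw [hstar, ← hU]
    rw [Matrix.mul_assoc, ← Matrix.mulVec_mulVec, ← Matrix.mulVec_mulVec]
    rw [Matrix.dotProduct_mulVec, ← Matrix.mulVec_transpose]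
    set w := Uᵀ *ᵥ v with hw
    simp only [dotProduct, Matrix.mulVec_diagonal, Function.comp_apply,
      RCLike.ofReal_real_eq_id, id_eq, pow_two]
    exact Finset.sum_congr rfl fun j _ => by ring


lemma sqrt_eig_mem (B : Matrix (Fin d) (Fin d) ℝ) (j : Fin d) :
    Real.sqrt ((Matrix.isHermitian_transpose_mul_self B).eigenvalues j) ∈ svlist B :=
  (svlist_perm B).mem_iff.mpr (List.mem_ofFn.mpr ⟨j, rfl⟩)

lemma dot_mulVec_le (B : Matrix (Fin d) (Fin d) ℝ) (v : Fin d → ℝ) :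
    (B *ᵥ v) ⬝ᵥ (B *ᵥ v) ≤ (sval B 1)^2 * (v ⬝ᵥ v) := by
  obtain ⟨w, hw, heq⟩ := quad_spectral B v
  rw [heq, ← hw]
  have : w ⬝ᵥ w = ∑ j, (w j)^2 := by simp [dotProduct, pow_two]
  rw [this, Finset.mul_sum]
  refine Finset.sum_le_sum fun j _ => ?_
  have hnn : 0 ≤ (Matrix.isHermitian_transpose_mul_self B).eigenvalues j :=
    Matrix.eigenvalues_conjTranspose_mul_self_nonneg B j
  have h1 : (Matrix.isHermitian_transpose_mul_self B).eigenvalues j ≤ (sval B 1)^2 := by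
    have := le_sval_one (sqrt_eig_mem B j)
    nlinarith [Real.sq_sqrt hnn, Real.sqrt_nonneg
      ((Matrix.isHermitian_transpose_mul_self B).eigenvalues j)]
  nlinarith [sq_nonneg (w j)]

lemma le_dot_mulVec (hd : 0 < d) (B : Matrix (Fin d) (Fin d) ℝ) (v : Fin d → ℝ) :
    (sval B d)^2 * (v ⬝ᵥ v) ≤ (B *ᵥ v) ⬝ᵥ (B *ᵥ v) := by
  obtain ⟨w, hw, heq⟩ := quad_spectral B v
  rw [heq, ← hw]
  have : w ⬝ᵥ w = ∑ j, (w j)^2 := by simp [dotProduct, pow_two]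
  rw [this, Finset.mul_sum]
  refine Finset.sum_le_sum fun j _ => ?_
  have hnn : 0 ≤ (Matrix.isHermitian_transpose_mul_self B).eigenvalues j :=
    Matrix.eigenvalues_conjTranspose_mul_self_nonneg B j
  have h1 : (sval B d)^2 ≤ (Matrix.isHermitian_transpose_mul_self B).eigenvalues j := by
    have := sval_d_le hd (sqrt_eig_mem B j)
    nlinarith [Real.sq_sqrt hnn, sval_nonneg B d]
  nlinarith [sq_nonneg (w j)]

lemma dot_self_nonneg (v : Fin d → ℝ) : 0 ≤ v ⬝ᵥ v :=
  Finset.sum_nonneg fun j _ => mul_self_nonneg _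

lemma dot_self_pos {v : Fin d → ℝ} (hv : v ≠ 0) : 0 < v ⬝ᵥ v := by
  have := Matrix.dotProduct_star_self_pos_iff (R := ℝ) (v := v)
  rw [star_trivial] at this
  exact this.mpr hv

lemma posDef_transpose_mul_self {M : Matrix (Fin d) (Fin d) ℝ} (hM : IsUnit M.det) :
    (Mᴴ * M).PosDef := by
  refine Matrix.posDef_iff_dotProduct_mulVec.mpr ⟨Matrix.isHermitian_transpose_mul_self M, fun x hx => ?_⟩
  rw [star_trivial, Matrix.conjTranspose_eq_transpose_of_trivial, quad_eq]
  refine dot_self_pos ?_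
  have hinj : Function.Injective (M.mulVec) :=
    Matrix.mulVec_injective_iff_isUnit.mpr ((Matrix.isUnit_iff_isUnit_det M).mpr hM)
  intro h0
  exact hx (hinj (by rw [h0, Matrix.mulVec_zero]))

lemma svlist_pos {M : Matrix (Fin d) (Fin d) ℝ} (hM : IsUnit M.det) {x : ℝ}
    (hx : x ∈ svlist M) : 0 < x := by
  have := (svlist_perm M).mem_iff.mp hx
  rw [List.mem_ofFn] at this
  obtain ⟨j, rfl⟩ := this
  exact Real.sqrt_pos.mpr ((posDef_transpose_mul_self hM).eigenvalues_pos j)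

lemma sval_pos {M : Matrix (Fin d) (Fin d) ℝ} {i : ℕ} (h1 : 1 ≤ i) (hi : i ≤ d)
    (hM : IsUnit M.det) : 0 < sval M i :=
  svlist_pos hM (sval_mem h1 hi)


lemma enorm_sq (x : EuclideanSpace ℝ (Fin d)) :
    ‖x‖^2 = (WithLp.equiv 2 (Fin d → ℝ) x) ⬝ᵥ (WithLp.equiv 2 (Fin d → ℝ) x) := by
  rw [PiLp.norm_sq_eq_of_L2]
  simp [dotProduct, WithLp.equiv_pi_apply, Real.norm_eq_abs, sq_abs, pow_two]

lemma mulVec_eq_sum (M : Matrix (Fin d) (Fin d) ℝ) (y : Fin d → ℝ) :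
    M *ᵥ y = ∑ j, y j • Mᵀ j := by
  funext i
  simp [Matrix.mulVec, dotProduct, Finset.sum_apply, Matrix.transpose_apply, mul_comm]

lemma mem_colSpan_iff {p : ℕ} {K : Matrix (Fin d) (Fin d) ℝ} (hK : K * Kᵀ = 1)
    (x : EuclideanSpace ℝ (Fin d)) :
    x ∈ colSpan K {j : Fin d | (j : ℕ) < p} ↔
      ∀ j : Fin d, p ≤ (j : ℕ) → (Kᵀ *ᵥ (WithLp.equiv 2 (Fin d → ℝ) x)) j = 0 := by
  have hKtK : Kᵀ * K = 1 := mul_eq_one_comm.mp hK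
  constructor
  · intro hx
    set S : Submodule ℝ (EuclideanSpace ℝ (Fin d)) :=
      { carrier := {x | ∀ j : Fin d, p ≤ (j : ℕ) →
          (Kᵀ *ᵥ (WithLp.equiv 2 (Fin d → ℝ) x)) j = 0},
        add_mem' := by
          intro a b ha hb j hj
          rw [WithLp.equiv_add, Matrix.mulVec_add]
          rw [Pi.add_apply, ha j hj, hb j hj, add_zero]
        zero_mem' := by
          intro j hj
          rw [WithLp.equiv_zero, Matrix.mulVec_zero]
          rfl
        smul_mem' := by
          intro c a ha j hj
          rw [WithLp.equiv_smul, Matrix.mulVec_smul]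
          rw [Pi.smul_apply, ha j hj, smul_zero] } with hS
    have hle : colSpan K {j : Fin d | (j : ℕ) < p} ≤ S := by
      rw [colSpan, Submodule.span_le]
      rintro - ⟨j0, hj0, rfl⟩
      intro j hj
      rw [Equiv.apply_symm_apply]
      have : (Kᵀ *ᵥ Kᵀ j0) j = (Kᵀ * K) j j0 := by
        simp [Matrix.mulVec, Matrix.mul_apply, dotProduct, Matrix.transpose_apply]
      rw [this, hKtK, Matrix.one_apply_ne]
      intro hcon
      rw [hcon] at hj
      exact absurd hj0 (by simpa using hj)
    exact hle hx
  · intro hx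
    set v := WithLp.equiv 2 (Fin d → ℝ) x with hv
    set y := Kᵀ *ᵥ v with hy
    have hxy : x = ∑ j, y j • (WithLp.equiv 2 (Fin d → ℝ)).symm (Kᵀ j) := by
      have h1 : K *ᵥ y = v := by
        rw [hy, Matrix.mulVec_mulVec, hK, Matrix.one_mulVec]
      have h2 : v = ∑ j, y j • Kᵀ j := by rw [← h1, mulVec_eq_sum]
      calc x = (WithLp.equiv 2 (Fin d → ℝ)).symm v := (Equiv.symm_apply_apply _ _).symm
        _ = (WithLp.linearEquiv 2 ℝ (Fin d → ℝ)).symm v := rfl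
        _ = ∑ j, y j • (WithLp.linearEquiv 2 ℝ (Fin d → ℝ)).symm (Kᵀ j) := by
            rw [h2, map_sum]
            exact Finset.sum_congr rfl fun j _ => by rw [_root_.map_smul]
        _ = ∑ j, y j • (WithLp.equiv 2 (Fin d → ℝ)).symm (Kᵀ j) := rfl
    rw [hxy]
    refine Submodule.sum_mem _ fun j _ => ?_
    rcases lt_or_ge (j : ℕ) p with hjp | hjp
    · exact Submodule.smul_mem _ _ (Submodule.subset_span ⟨j, hjp, rfl⟩)
    · have : y j = 0 := hx j hjp
      rw [this, zero_smul]
      exact Submodule.zero_mem _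


lemma svd_dot {M K L : Matrix (Fin d) (Fin d) ℝ} (hK : K * Kᵀ = 1) (σ : Fin d → ℝ)
    (hM : M = K * Matrix.diagonal σ * L) (v : Fin d → ℝ) :
    (M *ᵥ v) ⬝ᵥ (M *ᵥ v) = ∑ j, (σ j)^2 * ((L *ᵥ v) j)^2 := by
  have hKt : Kᵀ * K = 1 := mul_eq_one_comm.mp hK
  have h1 : M *ᵥ v = K *ᵥ (Matrix.diagonal σ *ᵥ (L *ᵥ v)) := by
    rw [Matrix.mulVec_mulVec, Matrix.mulVec_mulVec, hM]
  rw [h1, dot_orth hKt]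
  simp [dotProduct, Matrix.mulVec_diagonal]
  exact Finset.sum_congr rfl fun j _ => by ring

lemma sq_sum_eq_dot {L : Matrix (Fin d) (Fin d) ℝ} (hL : L * Lᵀ = 1) (v : Fin d → ℝ) :
    ∑ j, ((L *ᵥ v) j)^2 = v ⬝ᵥ v := by
  have hLt : Lᵀ * L = 1 := mul_eq_one_comm.mp hL
  rw [← dot_orth hLt v v]
  simp [dotProduct, pow_two]

lemma sval_comp_le {p : ℕ} (hpd : p < d) (A B KA LA KBA LBA : Matrix (Fin d) (Fin d) ℝ)
    (hKA : KA * KAᵀ = 1) (hLA : LA * LAᵀ = 1)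
    (hKBA : KBA * KBAᵀ = 1) (hLBA : LBA * LBAᵀ = 1)
    (hSVDA : A = KA * Matrix.diagonal (fun j : Fin d => sval A ((j : ℕ) + 1)) * LA)
    (hSVDBA : B * A = KBA * Matrix.diagonal (fun j : Fin d => sval (B * A) ((j : ℕ) + 1)) * LBA) :
    sval (B * A) (p + 1) ≤ sval B 1 * sval A (p + 1) := by
  set pIdx : Fin d := ⟨p, hpd⟩ with hpIdx
  -- a nonzero vector in the intersection of the kernels
  obtain ⟨v, hv0, hv⟩ : ∃ v : Fin d → ℝ, v ≠ 0 ∧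
      (∀ j : Fin d, (j : ℕ) < p → (LA *ᵥ v) j = 0) ∧
      (∀ j : Fin d, p < (j : ℕ) → (LBA *ᵥ v) j = 0) := by
    set φ : (Fin d → ℝ) →ₗ[ℝ] ({j : Fin d // j ≠ pIdx} → ℝ) :=
      { toFun := fun x j => if ((j : Fin d) : ℕ) < p then (LA *ᵥ x) (j : Fin d)
          else (LBA *ᵥ x) (j : Fin d),
        map_add' := by
          intro a b
          funext j
          by_cases h : ((j : Fin d) : ℕ) < p <;>
            simp [h, Matrix.mulVec_add]
        map_smul' := by
          intro c a
          funext j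
          by_cases h : ((j : Fin d) : ℕ) < p <;>
            simp [h, Matrix.mulVec_smul] } with hphi
    have hninj : ¬ Function.Injective φ := by
      intro hinj
      have hle := LinearMap.finrank_le_finrank_of_injective hinj
      rw [Module.finrank_fintype_fun_eq_card, Module.finrank_fintype_fun_eq_card] at hle
      rw [Fintype.card_fin] at hle
      have hcard : Fintype.card {j : Fin d // j ≠ pIdx} = d - 1 := by
        rw [Fintype.card_subtype_compl, Fintype.card_fin, Fintype.card_subtype_eq]
      rw [hcard] at hle
      omega
    rw [Function.not_injective_iff] at hninj
    obtain ⟨a, b, hab, hne⟩ := hninj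
    refine ⟨a - b, sub_ne_zero.mpr hne, ?_, ?_⟩
    · intro j hj
      have hjne : j ≠ pIdx := by
        intro h; rw [h] at hj; simp [hpIdx] at hj
      have := congrFun (by simp [map_sub, hab] : φ (a - b) = 0) ⟨j, hjne⟩
      simpa [hphi, hj] using this
    · intro j hj
      have hjne : j ≠ pIdx := by
        intro h; rw [h] at hj; simp [hpIdx] at hj
      have := congrFun (by simp [map_sub, hab] : φ (a - b) = 0) ⟨j, hjne⟩
      have hnlt : ¬ ((j : ℕ) < p) := by omega
      simpa [hphi, hnlt] using this
  obtain ⟨hvA, hvBA⟩ := hv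
  have hvv : 0 < v ⬝ᵥ v := dot_self_pos hv0
  -- lower bound
  have hlow : (sval (B * A) (p+1))^2 * (v ⬝ᵥ v) ≤ ((B * A) *ᵥ v) ⬝ᵥ ((B * A) *ᵥ v) := by
    rw [svd_dot hKBA _ hSVDBA v, ← sq_sum_eq_dot hLBA v, Finset.mul_sum]
    refine Finset.sum_le_sum fun j _ => ?_
    rcases le_or_gt ((j : ℕ) + 1) (p + 1) with hj | hj
    · have h1 : sval (B * A) (p+1) ≤ sval (B * A) ((j : ℕ) + 1) :=
        sval_le_sval (by omega) hj
      have h2 : (0:ℝ) ≤ sval (B * A) (p+1) := sval_nonneg _ _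
      exact mul_le_mul_of_nonneg_right (pow_le_pow_left₀ h2 h1 2) (sq_nonneg _)
    · rw [hvBA j (by omega)]
      simp
  -- upper bounds
  have hup1 : ((B * A) *ᵥ v) ⬝ᵥ ((B * A) *ᵥ v) ≤ (sval B 1)^2 * ((A *ᵥ v) ⬝ᵥ (A *ᵥ v)) := by
    rw [← Matrix.mulVec_mulVec]
    exact dot_mulVec_le B (A *ᵥ v)
  have hup2 : (A *ᵥ v) ⬝ᵥ (A *ᵥ v) ≤ (sval A (p+1))^2 * (v ⬝ᵥ v) := by
    rw [svd_dot hKA _ hSVDA v, ← sq_sum_eq_dot hLA v, Finset.mul_sum]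
    refine Finset.sum_le_sum fun j _ => ?_
    rcases lt_or_ge ((j : ℕ)) p with hj | hj
    · rw [hvA j hj]
      simp
    · have h1 : sval A ((j : ℕ) + 1) ≤ sval A (p+1) :=
        sval_le_sval (by omega) (by omega)
      have h2 : (0:ℝ) ≤ sval A ((j : ℕ) + 1) := sval_nonneg _ _
      exact mul_le_mul_of_nonneg_right (pow_le_pow_left₀ h2 h1 2) (sq_nonneg _)
  have hchain : (sval (B * A) (p+1))^2 * (v ⬝ᵥ v) ≤
      (sval B 1 * sval A (p+1))^2 * (v ⬝ᵥ v) := by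
    refine hlow.trans (hup1.trans ?_)
    have := mul_le_mul_of_nonneg_left hup2 (sq_nonneg (sval B 1))
    calc (sval B 1)^2 * ((A *ᵥ v) ⬝ᵥ (A *ᵥ v))
        ≤ (sval B 1)^2 * ((sval A (p+1))^2 * (v ⬝ᵥ v)) := this
      _ = (sval B 1 * sval A (p+1))^2 * (v ⬝ᵥ v) := by ring
  have hsq : (sval (B * A) (p+1))^2 ≤ (sval B 1 * sval A (p+1))^2 :=
    le_of_mul_le_mul_right hchain hvv
  have hnn1 : (0:ℝ) ≤ sval (B * A) (p+1) := sval_nonneg _ _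
  have hnn2 : (0:ℝ) ≤ sval B 1 * sval A (p+1) :=
    mul_nonneg (sval_nonneg _ _) (sval_nonneg _ _)
  exact (pow_le_pow_iff_left₀ hnn1 hnn2 (by norm_num)).mp hsq

end Stmt6


open Stmt6 Matrix in
/-- GGKW Lemma 5.8 / BPS Lemma A.5: if `σ_p(A) > σ_{p+1}(A)` and
`σ_p(BA) > σ_{p+1}(BA)`, then
`d(B · U_p(A), U_p(BA)) ≤ (σ₁/σ_d)(B) · (σ_{p+1}/σ_p)(A)`, where `U_p` is expressed via given
singular value decompositions and `d` is the distance on the Grassmannian. -/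
theorem stmt6 {d p : ℕ} (hp1 : 1 ≤ p) (hpd : p < d)
    (A B : Matrix (Fin d) (Fin d) ℝ) (hA : IsUnit A.det) (hB : IsUnit B.det)
    (hgapA : sval A (p + 1) < sval A p)
    (hgapBA : sval (B * A) (p + 1) < sval (B * A) p)
    (KA LA KBA LBA : Matrix (Fin d) (Fin d) ℝ)
    (hKA : KA * KA.transpose = 1) (hLA : LA * LA.transpose = 1)
    (hKBA : KBA * KBA.transpose = 1) (hLBA : LBA * LBA.transpose = 1)
    (hSVDA : A = KA * Matrix.diagonal (fun j : Fin d => sval A ((j : ℕ) + 1)) * LA)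
    (hSVDBA : B * A = KBA * Matrix.diagonal (fun j : Fin d => sval (B * A) ((j : ℕ) + 1)) * LBA) :
    grDist ((colSpan KA {j : Fin d | (j : ℕ) < p}).map (Matrix.toEuclideanLin B))
        (colSpan KBA {j : Fin d | (j : ℕ) < p})
      ≤ (sval B 1 / sval B d) * (sval A (p + 1) / sval A p) := by
  have hd : 0 < d := lt_of_le_of_lt (Nat.zero_le p) hpd
  set c := (sval B 1 / sval B d) * (sval A (p + 1) / sval A p) with hc
  have hBd : 0 < sval B d := sval_pos (by omega) le_rfl hB
  have hB1 : 0 < sval B 1 := lt_of_lt_of_le hBd (sval_le_sval le_rfl (by omega))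
  have hAp : 0 < sval A p := sval_pos hp1 (le_of_lt hpd) hA
  have hApnn : 0 ≤ sval A (p+1) := sval_nonneg _ _
  have hc0 : 0 ≤ c := by
    rw [hc]
    exact mul_nonneg (div_nonneg hB1.le hBd.le) (div_nonneg hApnn hAp.le)
  refine Real.sSup_le ?_ hc0
  rintro r ⟨u, ⟨hu, hnorm⟩, rfl⟩
  obtain ⟨w, hw, hwu⟩ := Submodule.mem_map.mp hu
  set ow := WithLp.equiv 2 (Fin d → ℝ) w with how
  clear_value ow
  set x := A⁻¹ *ᵥ ow with hxdef
  clear_value x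
  have hAx : A *ᵥ x = ow := by
    rw [hxdef, Matrix.mulVec_mulVec, Matrix.mul_nonsing_inv A hA, Matrix.one_mulVec]
  set ou := WithLp.equiv 2 (Fin d → ℝ) u with hou
  clear_value ou
  have houB : ou = B *ᵥ ow := by
    rw [hou, ← hwu, Matrix.piLp_equiv_toEuclideanLin_apply, ← how]
  have houBA : ou = (B * A) *ᵥ x := by
    rw [houB, ← hAx, Matrix.mulVec_mulVec]
  set z := LBA *ᵥ x with hz
  clear_value z
  set σBA := fun j : Fin d => sval (B * A) ((j : ℕ) + 1) with hσBA
  have houK : ou = KBA *ᵥ (Matrix.diagonal σBA *ᵥ z) := by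
    rw [houBA, hSVDBA, hz, Matrix.mulVec_mulVec, Matrix.mulVec_mulVec]
  set t1 : Fin d → ℝ := fun j => if (j : ℕ) < p then σBA j * z j else 0 with ht1
  set t2 : Fin d → ℝ := fun j => if (j : ℕ) < p then 0 else σBA j * z j with ht2
  have hsplit : Matrix.diagonal σBA *ᵥ z = t1 + t2 := by
    funext j
    rw [Matrix.mulVec_diagonal]
    by_cases hj : (j : ℕ) < p <;> simp [ht1, ht2, hj]
  set q := (WithLp.equiv 2 (Fin d → ℝ)).symm (KBA *ᵥ t1) with hq
  have hKBAt : KBAᵀ * KBA = 1 := mul_eq_one_comm.mp hKBA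
  have hqQ : q ∈ colSpan KBA {j : Fin d | (j : ℕ) < p} := by
    rw [mem_colSpan_iff hKBA]
    intro j hj
    rw [hq, Equiv.apply_symm_apply, Matrix.mulVec_mulVec, hKBAt, Matrix.one_mulVec]
    simp only [ht1]
    exact if_neg (by omega)
  have hstep1 : Metric.infDist u (colSpan KBA {j : Fin d | (j : ℕ) < p} :
      Set (EuclideanSpace ℝ (Fin d))) ≤ ‖u - q‖ := by
    rw [← dist_eq_norm]
    exact Metric.infDist_le_dist_of_mem hqQ
  have hdiff : WithLp.equiv 2 (Fin d → ℝ) (u - q) = KBA *ᵥ t2 := by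
    rw [WithLp.equiv_sub, ← hou, hq, Equiv.apply_symm_apply, houK, hsplit,
      Matrix.mulVec_add]
    abel
  have hnsq : ‖u - q‖^2 = t2 ⬝ᵥ t2 := by
    rw [enorm_sq, hdiff, dot_orth hKBAt]
  set X := x ⬝ᵥ x with hX
  have hXnn : 0 ≤ X := dot_self_nonneg x
  have hzz : z ⬝ᵥ z = X := by
    rw [hz, hX, dot_orth (mul_eq_one_comm.mp hLBA)]
  have ht2bound : t2 ⬝ᵥ t2 ≤ (sval (B * A) (p+1))^2 * X := by
    have h1 : t2 ⬝ᵥ t2 = ∑ j, (t2 j)^2 := by simp [dotProduct, pow_two]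
    have h2 : z ⬝ᵥ z = ∑ j, (z j)^2 := by simp [dotProduct, pow_two]
    rw [h1, ← hzz, h2, Finset.mul_sum]
    refine Finset.sum_le_sum fun j _ => ?_
    by_cases hj : (j : ℕ) < p
    · have he : t2 j = 0 := if_pos hj
      rw [he]
      simpa using mul_nonneg (sq_nonneg (sval (B * A) (p+1))) (sq_nonneg (z j))
    · have he : t2 j = σBA j * z j := if_neg hj
      rw [he, mul_pow]
      have hle : σBA j ≤ sval (B * A) (p+1) := sval_le_sval (by omega) (by omega)
      exact mul_le_mul_of_nonneg_right
        (pow_le_pow_left₀ (sval_nonneg _ _) hle 2) (sq_nonneg _)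
  set W := ow ⬝ᵥ ow with hW
  have hWnn : 0 ≤ W := dot_self_nonneg ow
  have hKAmul : KAᵀ *ᵥ ow =
      Matrix.diagonal (fun j : Fin d => sval A ((j : ℕ) + 1)) *ᵥ (LA *ᵥ x) := by
    rw [← hAx]
    conv_lhs => rw [hSVDA]
    rw [Matrix.mulVec_mulVec, Matrix.mulVec_mulVec, ← Matrix.mul_assoc,
      ← Matrix.mul_assoc, mul_eq_one_comm.mp hKA, Matrix.one_mul]
  have hLAx0 : ∀ j : Fin d, p ≤ (j : ℕ) → (LA *ᵥ x) j = 0 := by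
    intro j hj
    have hmem := (mem_colSpan_iff hKA w).mp hw j hj
    rw [← how, hKAmul, Matrix.mulVec_diagonal] at hmem
    have hpos : 0 < sval A ((j : ℕ) + 1) := sval_pos (by omega) (by omega) hA
    exact (mul_eq_zero.mp hmem).resolve_left hpos.ne'
  have hlowW : (sval A p)^2 * X ≤ W := by
    have hdot : W = ∑ j : Fin d, (sval A ((j : ℕ) + 1))^2 * ((LA *ᵥ x) j)^2 := by
      rw [hW, ← hAx, svd_dot hKA _ hSVDA]
    have hxdot : X = ∑ j, ((LA *ᵥ x) j)^2 := by
      rw [hX, ← sq_sum_eq_dot hLA x]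
    rw [hdot, hxdot, Finset.mul_sum]
    refine Finset.sum_le_sum fun j _ => ?_
    by_cases hj : (j : ℕ) < p
    · have hle : sval A p ≤ sval A ((j : ℕ) + 1) := sval_le_sval (by omega) (by omega)
      exact mul_le_mul_of_nonneg_right
        (pow_le_pow_left₀ (sval_nonneg _ _) hle 2) (sq_nonneg _)
    · rw [hLAx0 j (by omega)]
      simp
  have hWle : (sval B d)^2 * W ≤ 1 := by
    have h1 : ou ⬝ᵥ ou = 1 := by
      have h2 := enorm_sq u
      rw [hnorm, ← hou] at h2
      rw [← h2]
      norm_num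
    calc (sval B d)^2 * W ≤ (B *ᵥ ow) ⬝ᵥ (B *ᵥ ow) := le_dot_mulVec hd B ow
      _ = ou ⬝ᵥ ou := by rw [houB]
      _ = 1 := h1
  have hσle : sval (B * A) (p+1) ≤ sval B 1 * sval A (p+1) :=
    sval_comp_le hpd A B KA LA KBA LBA hKA hLA hKBA hLBA hSVDA hSVDBA
  have e1 : ‖u - q‖^2 * ((sval B d)^2 * (sval A p)^2) ≤ (sval B 1 * sval A (p+1))^2 := by
    have hA1 : ‖u - q‖^2 ≤ (sval (B * A) (p+1))^2 * X := hnsq ▸ ht2bound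
    calc ‖u - q‖^2 * ((sval B d)^2 * (sval A p)^2)
        ≤ ((sval (B * A) (p+1))^2 * X) * ((sval B d)^2 * (sval A p)^2) :=
          mul_le_mul_of_nonneg_right hA1 (mul_nonneg (sq_nonneg _) (sq_nonneg _))
      _ = (sval (B * A) (p+1))^2 * (sval B d)^2 * ((sval A p)^2 * X) := by ring
      _ ≤ (sval (B * A) (p+1))^2 * (sval B d)^2 * W :=
          mul_le_mul_of_nonneg_left hlowW (mul_nonneg (sq_nonneg _) (sq_nonneg _))
      _ = (sval (B * A) (p+1))^2 * ((sval B d)^2 * W) := by ring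
      _ ≤ (sval (B * A) (p+1))^2 * 1 :=
          mul_le_mul_of_nonneg_left hWle (sq_nonneg _)
      _ = (sval (B * A) (p+1))^2 := mul_one _
      _ ≤ (sval B 1 * sval A (p+1))^2 :=
          pow_le_pow_left₀ (sval_nonneg _ _) hσle 2
  have e2 : ‖u - q‖^2 ≤ c^2 := by
    have hpos : (0:ℝ) < (sval B d)^2 * (sval A p)^2 :=
      mul_pos (pow_pos hBd 2) (pow_pos hAp 2)
    have h3 := (le_div_iff₀ hpos).mpr e1
    have hcsq : c^2 = (sval B 1 * sval A (p+1))^2 / ((sval B d)^2 * (sval A p)^2) := by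
      rw [hc]
      ring
    rw [hcsq]
    exact h3
  have e3 : ‖u - q‖ ≤ c :=
    (pow_le_pow_iff_left₀ (norm_nonneg _) hc0 (by norm_num)).mp e2
  exact hstep1.trans e3
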